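/- For the Dirichlet Laplacian on Λ_L = {−L,…,L}^d with d ≥ 2, the total mass of the Green's function grows like L^{d+2}: there is a constant c_d > 0 with ∑_{i,j∈Λ_L} (−Δ_{Λ_L})⁻¹_{i,j} ≥ c_d · L^{d+2} for all L ≥ 1. -/

import Mathlib

open Finset Matrix


/-- Sites of the box `Λ_L = {-L,…,L}^d`, encoded as `Fin d → Fin (2L+1)`
(the site `v` corresponds to the lattice point `i ↦ (v i : ℤ) - L`). -/
abbrev LatticeBox (d L : ℕ) := Fin d → Fin (2 * L + 1)

/-- The matrix of `-Δ_Λ`, the negative lattice Laplacian with Dirichlet boundary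
conditions outside `Λ_L`: `(-Δ_Λ f)(i) = f i - (1/(2d)) ∑_{j ∼ i, j ∈ Λ} f j`. -/
noncomputable def dirichletLapMatrix (d L : ℕ) :
    Matrix (LatticeBox d L) (LatticeBox d L) ℝ :=
  fun v w =>
    if v = w then 1
    else if (∑ i, |((v i : ℤ) - (w i : ℤ))|) = 1 then -(1 / (2 * (d : ℝ))) else 0

/-- The center of the box, i.e. the origin of `ℤ^d`. -/
def boxCenter (d L : ℕ) : LatticeBox d L := fun _ => ⟨L, by omega⟩

namespace GreenAux
variable {d L : ℕ}



/-- the move map: `mvAux v (i, true) = v + e_i` (clamped), `mvAux v (i,false) = v - e_i`. -/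
def mvAux (v : LatticeBox d L) (p : Fin d × Bool) : LatticeBox d L :=
  Function.update v p.1
    (cond p.2 ⟨min ((v p.1 : ℕ) + 1) (2 * L), Nat.lt_succ_of_le (min_le_right _ _)⟩
      ⟨(v p.1 : ℕ) - 1, lt_of_le_of_lt (Nat.sub_le _ _) (v p.1).isLt⟩)

/-- validity predicate for a move -/
def PAux (v : LatticeBox d L) (p : Fin d × Bool) : Prop :=
  cond p.2 (((v p.1 : ℕ) + 1) < 2 * L + 1) (0 < (v p.1 : ℕ))

instance (v : LatticeBox d L) (p : Fin d × Bool) : Decidable (PAux v p) := by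
  unfold PAux; cases p.2 <;> simp <;> infer_instance

lemma mv_val_true (v : LatticeBox d L) (i : Fin d) :
    ((mvAux v (i, true)) i : ℕ) = min ((v i : ℕ) + 1) (2 * L) := by
  unfold mvAux; rw [Function.update_self]; rfl

lemma mv_val_false (v : LatticeBox d L) (i : Fin d) :
    ((mvAux v (i, false)) i : ℕ) = (v i : ℕ) - 1 := by
  unfold mvAux; rw [Function.update_self]; rfl

lemma mv_noteq (v : LatticeBox d L) (p : Fin d × Bool) (j : Fin d) (hj : j ≠ p.1) :
    mvAux v p j = v j := Function.update_of_ne hj _ _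

lemma mv_eq_true (v : LatticeBox d L) (i : Fin d) (h : ((v i : ℕ) + 1) < 2 * L + 1) :
    mvAux v (i, true) = Function.update v i ⟨(v i : ℕ) + 1, h⟩ := by
  funext j
  by_cases hj : j = i
  · subst hj
    refine Fin.ext ?_
    rw [mv_val_true, Function.update_self]
    exact min_eq_left (by omega)
  · rw [mv_noteq v _ j hj, Function.update_of_ne hj]

lemma mv_eq_false (v : LatticeBox d L) (i : Fin d) :
    mvAux v (i, false) = Function.update v i
      ⟨(v i : ℕ) - 1, lt_of_le_of_lt (Nat.sub_le _ _) (v i).isLt⟩ := by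
  funext j
  by_cases hj : j = i
  · subst hj
    refine Fin.ext ?_
    rw [mv_val_false, Function.update_self]
  · rw [mv_noteq v _ j hj, Function.update_of_ne hj]

lemma sum_adj (v : LatticeBox d L) (f : LatticeBox d L → ℝ) :
    ∑ w : LatticeBox d L, (if (∑ i, |((v i : ℤ) - (w i : ℤ))|) = 1 then f w else 0)
    = ∑ i : Fin d,
        ((if h : ((v i : ℕ) + 1) < 2 * L + 1 then f (Function.update v i ⟨(v i : ℕ) + 1, h⟩) else 0)
       + (if h : 0 < (v i : ℕ) then
            f (Function.update v i ⟨(v i : ℕ) - 1, lt_of_le_of_lt (Nat.sub_le _ _) (v i).isLt⟩)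
          else 0)) := by
  classical
  have hRHS : ∑ i : Fin d,
        ((if h : ((v i : ℕ) + 1) < 2 * L + 1 then f (Function.update v i ⟨(v i : ℕ) + 1, h⟩) else 0)
       + (if h : 0 < (v i : ℕ) then
            f (Function.update v i ⟨(v i : ℕ) - 1, lt_of_le_of_lt (Nat.sub_le _ _) (v i).isLt⟩)
          else 0))
      = ∑ p ∈ Finset.univ.filter (PAux v), f (mvAux v p) := by
    rw [Finset.sum_filter, Fintype.sum_prod_type]
    refine Finset.sum_congr rfl fun i _ => ?_
    rw [Fintype.sum_bool]
    have e1 : (if h : ((v i : ℕ) + 1) < 2 * L + 1 then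
          f (Function.update v i ⟨(v i : ℕ) + 1, h⟩) else 0)
        = (if PAux v (i, true) then f (mvAux v (i, true)) else 0) := by
      by_cases h : ((v i : ℕ) + 1) < 2 * L + 1
      · rw [dif_pos h, if_pos (show PAux v (i, true) from h), mv_eq_true v i h]
      · rw [dif_neg h, if_neg (show ¬ PAux v (i, true) from h)]
    have e2 : (if h : 0 < (v i : ℕ) then
          f (Function.update v i
            ⟨(v i : ℕ) - 1, lt_of_le_of_lt (Nat.sub_le _ _) (v i).isLt⟩) else 0)
        = (if PAux v (i, false) then f (mvAux v (i, false)) else 0) := by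
      by_cases h : 0 < (v i : ℕ)
      · rw [dif_pos h, if_pos (show PAux v (i, false) from h), mv_eq_false v i]
      · rw [dif_neg h, if_neg (show ¬ PAux v (i, false) from h)]
    rw [e1, e2]
  rw [hRHS, ← Finset.sum_filter]
  refine (Finset.sum_bij (fun p (_ : p ∈ Finset.univ.filter (PAux v)) => mvAux v p)
    ?_ ?_ ?_ ?_).symm
  · -- maps into adjacency set
    rintro ⟨i, s⟩ hp
    simp only [Finset.mem_filter, Finset.mem_univ, true_and] at hp ⊢
    have habs : ∀ a b : ℤ, a - b = 1 ∨ a - b = -1 → |a - b| = 1 := by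
      intro a b hab; rcases hab with h | h <;> rw [h] <;> norm_num
    rw [Finset.sum_eq_single i]
    · cases s
      · have h : 0 < (v i : ℕ) := hp
        have hv := mv_val_false v i
        refine habs _ _ (Or.inl ?_)
        omega
      · have h : ((v i : ℕ) + 1) < 2 * L + 1 := hp
        have hv := mv_val_true v i
        refine habs _ _ (Or.inr ?_)
        omega
    · intro j _ hj
      rw [mv_noteq v _ j hj]
      simp
    · intro h; exact absurd (Finset.mem_univ i) h
  · -- injective
    rintro ⟨i, s⟩ hp ⟨i', s'⟩ hp' heq
    simp only [Finset.mem_filter, Finset.mem_univ, true_and] at hp hp'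
    by_cases hii : i = i'
    · subst hii
      suffices hss : s = s' by rw [hss]
      by_contra hss
      have h0 : mvAux v (i, s) = mvAux v (i, s') := heq
      have h1 := congrArg Fin.val (congrFun h0 i)
      cases s <;> cases s'
      · exact hss rfl
      · have ht := mv_val_true v i
        have hf := mv_val_false v i
        have hg : 0 < (v i : ℕ) := hp
        have hg' : ((v i : ℕ) + 1) < 2 * L + 1 := hp'
        rw [hf, ht] at h1
        omega
      · have ht := mv_val_true v i
        have hf := mv_val_false v i
        have hg' : 0 < (v i : ℕ) := hp'
        have hg : ((v i : ℕ) + 1) < 2 * L + 1 := hp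
        rw [ht, hf] at h1
        omega
      · exact hss rfl
    · exfalso
      have ha : mvAux v (i, s) = mvAux v (i', s') := heq
      have h0 := congrFun ha i
      rw [mv_noteq v (i', s') i (fun hc => hii hc)] at h0
      have h1 := congrArg Fin.val h0
      cases s
      · have hf := mv_val_false v i
        have hg : 0 < (v i : ℕ) := hp
        rw [hf] at h1
        omega
      · have ht := mv_val_true v i
        have hg : ((v i : ℕ) + 1) < 2 * L + 1 := hp
        rw [ht] at h1
        omega
  · -- surjective
    intro w hw
    simp only [Finset.mem_filter, Finset.mem_univ, true_and] at hw
    have hne : ∃ j, |((v j : ℤ) - (w j : ℤ))| ≠ 0 := by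
      by_contra hcon
      push_neg at hcon
      rw [Finset.sum_eq_zero (fun j _ => hcon j)] at hw
      exact one_ne_zero hw.symm
    obtain ⟨j₀, hj₀⟩ := hne
    have hsum := Finset.sum_erase_add Finset.univ
      (fun j => |((v j : ℤ) - (w j : ℤ))|) (mem_univ j₀)
    have hrest_nonneg : 0 ≤ ∑ j ∈ Finset.univ.erase j₀, |((v j : ℤ) - (w j : ℤ))| :=
      Finset.sum_nonneg fun j _ => abs_nonneg _
    have hone : (1 : ℤ) ≤ |((v j₀ : ℤ) - (w j₀ : ℤ))| := by
      have := abs_nonneg ((v j₀ : ℤ) - (w j₀ : ℤ))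
      omega
    have habs1 : |((v j₀ : ℤ) - (w j₀ : ℤ))| = 1 := by omega
    have hrest0 : ∑ j ∈ Finset.univ.erase j₀, |((v j : ℤ) - (w j : ℤ))| = 0 := by omega
    have hweq : ∀ j, j ≠ j₀ → w j = v j := by
      intro j hj
      have h0 := (Finset.sum_eq_zero_iff_of_nonneg fun j _ => abs_nonneg _).mp hrest0 j
        (Finset.mem_erase.mpr ⟨hj, mem_univ j⟩)
      have h1 : (w j : ℤ) = (v j : ℤ) := (sub_eq_zero.mp (abs_eq_zero.mp h0)).symm
      exact Fin.ext (by exact_mod_cast h1)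
    rcases (abs_eq (by norm_num : (0:ℤ) ≤ 1)).mp habs1 with hcase | hcase
    · -- w j₀ = v j₀ - 1
      have hg : 0 < (v j₀ : ℕ) := by omega
      refine ⟨(j₀, false), Finset.mem_filter.mpr ⟨Finset.mem_univ _, hg⟩, ?_⟩
      show mvAux v (j₀, false) = w
      funext j
      by_cases hj : j = j₀
      · subst hj
        refine Fin.ext ?_
        rw [mv_val_false]
        omega
      · rw [mv_noteq v _ j hj]
        exact (hweq j hj).symm
    · -- w j₀ = v j₀ + 1
      have hwlt := (w j₀).isLt
      have hg : ((v j₀ : ℕ) + 1) < 2 * L + 1 := by omega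
      refine ⟨(j₀, true), Finset.mem_filter.mpr ⟨Finset.mem_univ _, hg⟩, ?_⟩
      show mvAux v (j₀, true) = w
      funext j
      by_cases hj : j = j₀
      · subst hj
        refine Fin.ext ?_
        rw [mv_val_true]
        omega
      · rw [mv_noteq v _ j hj]
        exact (hweq j hj).symm
  · intro p hp; rfl




noncomputable def gr (L : ℕ) (x : ℝ) : ℝ := ((L : ℝ) + 1) ^ 2 - (x - (L : ℝ)) ^ 2

noncomputable def uf (d L : ℕ) (v : LatticeBox d L) : ℝ := ∏ i, gr L ((v i : ℕ) : ℝ)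

noncomputable def Pv (d L : ℕ) (v : LatticeBox d L) (i : Fin d) : ℝ :=
  ∏ j ∈ Finset.univ.erase i, gr L ((v j : ℕ) : ℝ)

lemma gr_lb (k : Fin (2 * L + 1)) : (1 : ℝ) ≤ gr L ((k : ℕ) : ℝ) := by
  have h1 : ((k : ℕ) : ℝ) ≤ 2 * L := by
    have h := Nat.lt_succ_iff.mp k.isLt
    calc ((k : ℕ) : ℝ) ≤ ((2 * L : ℕ) : ℝ) := by exact_mod_cast h
    _ = 2 * L := by push_cast; ring
  have h0 : (0 : ℝ) ≤ ((k : ℕ) : ℝ) := Nat.cast_nonneg _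
  unfold gr
  nlinarith [mul_nonneg h0 (by linarith : (0:ℝ) ≤ 2 * L - ((k : ℕ) : ℝ))]

lemma gr_pos (k : Fin (2 * L + 1)) : (0 : ℝ) < gr L ((k : ℕ) : ℝ) :=
  lt_of_lt_of_le one_pos (gr_lb k)

lemma gr_ub (k : Fin (2 * L + 1)) : gr L ((k : ℕ) : ℝ) ≤ ((L : ℝ) + 1) ^ 2 := by
  unfold gr; nlinarith [sq_nonneg (((k : ℕ) : ℝ) - L)]

lemma uf_pos (v : LatticeBox d L) : 0 < uf d L v :=
  Finset.prod_pos fun i _ => gr_pos (v i)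

lemma Pv_pos (v : LatticeBox d L) (i : Fin d) : 0 < Pv d L v i :=
  Finset.prod_pos fun j _ => gr_pos (v j)

lemma Pv_le (v : LatticeBox d L) (i : Fin d) :
    Pv d L v i ≤ (((L : ℝ) + 1) ^ 2) ^ (d - 1) := by
  have h := Finset.prod_le_prod (s := Finset.univ.erase i)
    (f := fun j => gr L ((v j : ℕ) : ℝ)) (g := fun _ => ((L : ℝ) + 1) ^ 2)
    (fun j _ => le_of_lt (gr_pos (v j))) (fun j _ => gr_ub (v j))
  rw [Finset.prod_const, Finset.card_erase_of_mem (mem_univ i), Finset.card_univ,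
    Fintype.card_fin] at h
  exact h

lemma uf_update (v : LatticeBox d L) (i : Fin d) (a : Fin (2 * L + 1)) :
    uf d L (Function.update v i a) = gr L ((a : ℕ) : ℝ) * Pv d L v i := by
  unfold uf Pv
  have hpt : ∀ j, gr L (((Function.update v i a) j : ℕ) : ℝ)
      = Function.update (fun j => gr L ((v j : ℕ) : ℝ)) i (gr L ((a : ℕ) : ℝ)) j := by
    intro j
    by_cases hj : j = i
    · subst hj; simp
    · simp [Function.update_of_ne hj]
  rw [Finset.prod_congr rfl fun j _ => hpt j,
    Finset.prod_update_of_mem (Finset.mem_univ i), Finset.sdiff_singleton_eq_erase]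

lemma gr_uf (v : LatticeBox d L) (i : Fin d) :
    gr L ((v i : ℕ) : ℝ) * Pv d L v i = uf d L v := by
  unfold uf Pv
  rw [Finset.mul_prod_erase Finset.univ (fun j => gr L ((v j : ℕ) : ℝ)) (Finset.mem_univ i)]

/-- pointwise decomposition of the matrix action -/
lemma mulVec_eq (x : LatticeBox d L → ℝ) (v : LatticeBox d L) :
    (dirichletLapMatrix d L *ᵥ x) v
      = x v - (1 / (2 * (d : ℝ)))
          * ∑ w : LatticeBox d L, (if (∑ i, |((v i : ℤ) - (w i : ℤ))|) = 1 then x w else 0) := by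
  classical
  have hpt : ∀ w, dirichletLapMatrix d L v w * x w
      = (if v = w then x w else 0)
        + (-(1 / (2 * (d : ℝ)))) * (if (∑ i, |((v i : ℤ) - (w i : ℤ))|) = 1 then x w else 0) := by
    intro w
    by_cases hvw : v = w
    · subst hvw
      have hz : ¬ ((∑ i, |((v i : ℤ) - (v i : ℤ))|) = 1) := by simp
      simp [dirichletLapMatrix, hz]
    · by_cases hdist : (∑ i, |((v i : ℤ) - (w i : ℤ))|) = 1
      · simp [dirichletLapMatrix, hvw, hdist]
      · simp [dirichletLapMatrix, hvw, hdist]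
  show ∑ w, dirichletLapMatrix d L v w * x w = _
  rw [Finset.sum_congr rfl fun w _ => hpt w, Finset.sum_add_distrib, ← Finset.mul_sum,
    Finset.sum_ite_eq univ v x]
  simp only [Finset.mem_univ, if_true]
  ring


/-- action of the Laplacian on the test function -/
lemma Mu_eq (hd : 1 ≤ d) (hL : 1 ≤ L) (v : LatticeBox d L) :
    (dirichletLapMatrix d L *ᵥ uf d L) v = (1 / (d : ℝ)) * ∑ i, Pv d L v i := by
  rw [mulVec_eq, sum_adj]
  have hterm : ∀ i : Fin d,
      ((if h : ((v i : ℕ) + 1) < 2 * L + 1 then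
          uf d L (Function.update v i ⟨(v i : ℕ) + 1, h⟩) else 0)
       + (if h : 0 < (v i : ℕ) then
            uf d L (Function.update v i
              ⟨(v i : ℕ) - 1, lt_of_le_of_lt (Nat.sub_le _ _) (v i).isLt⟩)
          else 0))
      = (2 * gr L ((v i : ℕ) : ℝ) - 2) * Pv d L v i := by
    intro i
    have hgr : gr L (((v i : ℕ) : ℝ) + 1) + gr L (((v i : ℕ) : ℝ) - 1)
        = 2 * gr L ((v i : ℕ) : ℝ) - 2 := by
      unfold gr; ring
    have hub : (v i : ℕ) ≤ 2 * L := Nat.lt_succ_iff.mp (v i).isLt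
    by_cases h1 : ((v i : ℕ) + 1) < 2 * L + 1
    · by_cases h2 : 0 < (v i : ℕ)
      · rw [dif_pos h1, dif_pos h2, uf_update, uf_update]
        rw [← hgr]
        have c1 : (((⟨(v i : ℕ) + 1, h1⟩ : Fin (2 * L + 1)) : ℕ) : ℝ) = ((v i : ℕ) : ℝ) + 1 := by
          push_cast; ring
        have c2 : (((⟨(v i : ℕ) - 1, lt_of_le_of_lt (Nat.sub_le _ _) (v i).isLt⟩
            : Fin (2 * L + 1)) : ℕ) : ℝ) = ((v i : ℕ) : ℝ) - 1 := by
          show (((v i : ℕ) - 1 : ℕ) : ℝ) = ((v i : ℕ) : ℝ) - 1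
          rw [Nat.cast_sub h2]; norm_num
        rw [c1, c2]; ring
      · -- v i = 0, the -1 neighbour is absent and gr(-1) = 0
        have hv0 : (v i : ℕ) = 0 := by omega
        rw [dif_pos h1, dif_neg h2, uf_update]
        have c1 : (((⟨(v i : ℕ) + 1, h1⟩ : Fin (2 * L + 1)) : ℕ) : ℝ) = ((v i : ℕ) : ℝ) + 1 := by
          push_cast; ring
        rw [c1, ← hgr]
        have hz : gr L (((v i : ℕ) : ℝ) - 1) = 0 := by
          rw [hv0]; unfold gr; push_cast; ring
        rw [hz]; ring
    · -- v i = 2L, the +1 neighbour is absent and gr(2L+1) = 0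
      have hv0 : (v i : ℕ) = 2 * L := by omega
      have h2 : 0 < (v i : ℕ) := by omega
      rw [dif_neg h1, dif_pos h2, uf_update]
      have c2 : (((⟨(v i : ℕ) - 1, lt_of_le_of_lt (Nat.sub_le _ _) (v i).isLt⟩
          : Fin (2 * L + 1)) : ℕ) : ℝ) = ((v i : ℕ) : ℝ) - 1 := by
        show (((v i : ℕ) - 1 : ℕ) : ℝ) = ((v i : ℕ) : ℝ) - 1
        rw [Nat.cast_sub h2]; norm_num
      rw [c2, ← hgr]
      have hz : gr L (((v i : ℕ) : ℝ) + 1) = 0 := by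
        rw [hv0]; unfold gr; push_cast; ring
      rw [hz]; ring
  rw [Finset.sum_congr rfl fun i _ => hterm i]
  have hsplit : ∑ i, (2 * gr L ((v i : ℕ) : ℝ) - 2) * Pv d L v i
      = (d : ℝ) * (2 * uf d L v) - ∑ i, 2 * Pv d L v i := by
    have h0 : ∀ i : Fin d, (2 * gr L ((v i : ℕ) : ℝ) - 2) * Pv d L v i
        = 2 * uf d L v - 2 * Pv d L v i := by
      intro i
      rw [show (2 * gr L ((v i : ℕ) : ℝ) - 2) * Pv d L v i
          = 2 * (gr L ((v i : ℕ) : ℝ) * Pv d L v i) - 2 * Pv d L v i by ring, gr_uf]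
    rw [Finset.sum_congr rfl fun i _ => h0 i, Finset.sum_sub_distrib, Finset.sum_const,
      Finset.card_univ, Fintype.card_fin, nsmul_eq_mul]
  rw [hsplit, ← Finset.mul_sum]
  have hd0 : (d : ℝ) ≠ 0 := Nat.cast_ne_zero.mpr (by omega)
  field_simp
  ring

lemma amgm (a b s t : ℝ) (ha : 0 < a) (hb : 0 < b) :
    s * t ≤ (b / a * s ^ 2 + a / b * t ^ 2) / 2 := by
  have h2 : 0 ≤ (b / a * s ^ 2 + a / b * t ^ 2) / 2 - s * t := by
    have he : (b / a * s ^ 2 + a / b * t ^ 2) / 2 - s * t = (b * s - a * t) ^ 2 / (2 * a * b) := by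
      field_simp
      ring
    rw [he]
    positivity
  linarith

lemma Mu_pos (hd : 1 ≤ d) (hL : 1 ≤ L) (v : LatticeBox d L) :
    0 < (dirichletLapMatrix d L *ᵥ uf d L) v := by
  rw [Mu_eq hd hL]
  have : Nonempty (Fin d) := ⟨⟨0, by omega⟩⟩
  have h1 : 0 < ∑ i, Pv d L v i := Finset.sum_pos (fun i _ => Pv_pos v i) Finset.univ_nonempty
  have h2 : (0:ℝ) < 1 / (d : ℝ) := by
    have : (0:ℝ) < (d:ℝ) := by exact_mod_cast Nat.pos_of_ne_zero (by omega)
    positivity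
  exact mul_pos h2 h1

lemma Mu_le (hd : 1 ≤ d) (hL : 1 ≤ L) (v : LatticeBox d L) :
    (dirichletLapMatrix d L *ᵥ uf d L) v ≤ (((L : ℝ) + 1) ^ 2) ^ (d - 1) := by
  rw [Mu_eq hd hL]
  have hd0 : (0:ℝ) < (d:ℝ) := by exact_mod_cast Nat.pos_of_ne_zero (by omega)
  have h1 : ∑ i, Pv d L v i ≤ (d : ℝ) * (((L : ℝ) + 1) ^ 2) ^ (d - 1) := by
    calc ∑ i, Pv d L v i ≤ ∑ _i : Fin d, (((L : ℝ) + 1) ^ 2) ^ (d - 1) :=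
          Finset.sum_le_sum fun i _ => Pv_le v i
    _ = (d : ℝ) * (((L : ℝ) + 1) ^ 2) ^ (d - 1) := by
          rw [Finset.sum_const, Finset.card_univ, Fintype.card_fin, nsmul_eq_mul]
  calc (1 / (d : ℝ)) * ∑ i, Pv d L v i
      ≤ (1 / (d : ℝ)) * ((d : ℝ) * (((L : ℝ) + 1) ^ 2) ^ (d - 1)) := by
        apply mul_le_mul_of_nonneg_left h1
        positivity
  _ = (((L : ℝ) + 1) ^ 2) ^ (d - 1) := by field_simp

lemma M_symm (v w : LatticeBox d L) :
    dirichletLapMatrix d L v w = dirichletLapMatrix d L w v := by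
  unfold dirichletLapMatrix
  rw [show (∑ i, |((w i : ℤ) - (v i : ℤ))|) = ∑ i, |((v i : ℤ) - (w i : ℤ))| by
    exact Finset.sum_congr rfl fun i _ => abs_sub_comm _ _]
  by_cases h : v = w
  · subst h; rfl
  · have h' : ¬ w = v := fun hc => h hc.symm
    simp only [h, h', if_false]

lemma dot_symm (x y : LatticeBox d L → ℝ) :
    x ⬝ᵥ (dirichletLapMatrix d L *ᵥ y) = y ⬝ᵥ (dirichletLapMatrix d L *ᵥ x) := by
  simp only [Matrix.mulVec, dotProduct, Finset.mul_sum]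
  rw [Finset.sum_comm]
  exact Finset.sum_congr rfl fun w _ => Finset.sum_congr rfl fun v _ => by
    rw [M_symm v w]; ring

lemma dist_symm (v w : LatticeBox d L) :
    (∑ i, |((w i : ℤ) - (v i : ℤ))|) = ∑ i, |((v i : ℤ) - (w i : ℤ))| :=
  Finset.sum_congr rfl fun i _ => abs_sub_comm _ _

/-- ground-state transform lower bound for the quadratic form -/
lemma quad_lower (hd : 1 ≤ d) (hL : 1 ≤ L) (x : LatticeBox d L → ℝ) :
    ∑ v, x v ^ 2 * ((dirichletLapMatrix d L *ᵥ uf d L) v / uf d L v)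
      ≤ x ⬝ᵥ (dirichletLapMatrix d L *ᵥ x) := by
  classical
  have hd0 : (d : ℝ) ≠ 0 := Nat.cast_ne_zero.mpr (by omega)
  -- notation for the neighbour sums
  set N : (LatticeBox d L → ℝ) → LatticeBox d L → ℝ := fun y v =>
    ∑ w : LatticeBox d L, (if (∑ i, |((v i : ℤ) - (w i : ℤ))|) = 1 then y w else 0) with hN
  have hQ : x ⬝ᵥ (dirichletLapMatrix d L *ᵥ x)
      = ∑ v, x v ^ 2 - (1 / (2 * (d : ℝ))) * ∑ v, x v * N x v := by
    show ∑ v, x v * (dirichletLapMatrix d L *ᵥ x) v = _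
    have h1 : ∀ v, x v * (dirichletLapMatrix d L *ᵥ x) v
        = x v ^ 2 - (1 / (2 * (d : ℝ))) * (x v * N x v) := by
      intro v
      rw [mulVec_eq x v]
      simp only [hN]
      ring
    rw [Finset.sum_congr rfl fun v _ => h1 v, Finset.sum_sub_distrib, ← Finset.mul_sum]
  have hT : ∑ v, x v * N x v ≤ ∑ v, (x v ^ 2 / uf d L v) * N (uf d L) v := by
    have step1 : ∀ v, x v * N x v
        = ∑ w : LatticeBox d L,
            (if (∑ i, |((v i : ℤ) - (w i : ℤ))|) = 1 then x v * x w else 0) := by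
      intro v
      rw [hN, Finset.mul_sum]
      exact Finset.sum_congr rfl fun w _ => by rw [mul_ite, mul_zero]
    have step2 : ∀ v w : LatticeBox d L,
        (if (∑ i, |((v i : ℤ) - (w i : ℤ))|) = 1 then x v * x w else 0)
        ≤ (if (∑ i, |((v i : ℤ) - (w i : ℤ))|) = 1 then
            (uf d L w / uf d L v * x v ^ 2 + uf d L v / uf d L w * x w ^ 2) / 2 else 0) := by
      intro v w
      split_ifs with h
      · exact amgm _ _ _ _ (uf_pos v) (uf_pos w)
      · exact le_refl 0
    calc ∑ v, x v * N x v
        ≤ ∑ v, ∑ w : LatticeBox d L,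
            (if (∑ i, |((v i : ℤ) - (w i : ℤ))|) = 1 then
              (uf d L w / uf d L v * x v ^ 2 + uf d L v / uf d L w * x w ^ 2) / 2 else 0) := by
          rw [Finset.sum_congr rfl fun v _ => step1 v]
          exact Finset.sum_le_sum fun v _ => Finset.sum_le_sum fun w _ => step2 v w
    _ = ∑ v, ∑ w : LatticeBox d L,
            (if (∑ i, |((v i : ℤ) - (w i : ℤ))|) = 1 then
              uf d L w / uf d L v * x v ^ 2 else 0) := by
          have hsplit : ∀ v w : LatticeBox d L,
              (if (∑ i, |((v i : ℤ) - (w i : ℤ))|) = 1 then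
                (uf d L w / uf d L v * x v ^ 2 + uf d L v / uf d L w * x w ^ 2) / 2 else 0)
              = (if (∑ i, |((v i : ℤ) - (w i : ℤ))|) = 1 then
                  uf d L w / uf d L v * x v ^ 2 / 2 else 0)
                + (if (∑ i, |((v i : ℤ) - (w i : ℤ))|) = 1 then
                  uf d L v / uf d L w * x w ^ 2 / 2 else 0) := by
            intro v w; split_ifs <;> ring
          rw [Finset.sum_congr rfl fun v _ => Finset.sum_congr rfl fun w _ => hsplit v w]
          rw [Finset.sum_congr rfl fun v _ => Finset.sum_add_distrib, Finset.sum_add_distrib]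
          have hswap : ∑ v, ∑ w : LatticeBox d L,
              (if (∑ i, |((v i : ℤ) - (w i : ℤ))|) = 1 then
                uf d L v / uf d L w * x w ^ 2 / 2 else 0)
              = ∑ v, ∑ w : LatticeBox d L,
              (if (∑ i, |((v i : ℤ) - (w i : ℤ))|) = 1 then
                uf d L w / uf d L v * x v ^ 2 / 2 else 0) := by
            rw [Finset.sum_comm]
            exact Finset.sum_congr rfl fun v _ => Finset.sum_congr rfl fun w _ => by
              rw [dist_symm]
          rw [hswap, ← Finset.sum_add_distrib]
          exact Finset.sum_congr rfl fun v _ => by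
            rw [← Finset.sum_add_distrib]
            exact Finset.sum_congr rfl fun w _ => by split_ifs <;> ring
    _ = ∑ v, (x v ^ 2 / uf d L v) * N (uf d L) v := by
          refine Finset.sum_congr rfl fun v _ => ?_
          rw [hN, Finset.mul_sum]
          refine Finset.sum_congr rfl fun w _ => ?_
          rw [mul_ite, mul_zero]
          split_ifs with h
          · rw [div_mul_eq_mul_div, div_mul_eq_mul_div]
            ring
          · rfl
  rw [hQ]
  have hc : (0:ℝ) ≤ 1 / (2 * (d : ℝ)) := by positivity
  have := mul_le_mul_of_nonneg_left hT hc
  have hfinal : ∑ v, x v ^ 2 - (1 / (2 * (d : ℝ))) * ∑ v, (x v ^ 2 / uf d L v) * N (uf d L) v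
      = ∑ v, x v ^ 2 * ((dirichletLapMatrix d L *ᵥ uf d L) v / uf d L v) := by
    rw [Finset.mul_sum, ← Finset.sum_sub_distrib]
    refine Finset.sum_congr rfl fun v _ => ?_
    have hm : (dirichletLapMatrix d L *ᵥ uf d L) v
        = uf d L v - (1 / (2 * (d : ℝ))) * N (uf d L) v := mulVec_eq (uf d L) v
    rw [hm]
    have hu : uf d L v ≠ 0 := ne_of_gt (uf_pos v)
    field_simp
  linarith

lemma quad_nonneg (hd : 1 ≤ d) (hL : 1 ≤ L) (x : LatticeBox d L → ℝ) :
    0 ≤ x ⬝ᵥ (dirichletLapMatrix d L *ᵥ x) := by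
  refine le_trans ?_ (quad_lower hd hL x)
  refine Finset.sum_nonneg fun v _ => ?_
  exact mul_nonneg (sq_nonneg _) (le_of_lt (div_pos (Mu_pos hd hL v) (uf_pos v)))

lemma quad_pos (hd : 1 ≤ d) (hL : 1 ≤ L) (x : LatticeBox d L → ℝ) (hx : x ≠ 0) :
    0 < x ⬝ᵥ (dirichletLapMatrix d L *ᵥ x) := by
  refine lt_of_lt_of_le ?_ (quad_lower hd hL x)
  obtain ⟨v₀, hv₀⟩ := Function.ne_iff.mp hx
  refine Finset.sum_pos' (fun v _ =>
    mul_nonneg (sq_nonneg _) (le_of_lt (div_pos (Mu_pos hd hL v) (uf_pos v))))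
    ⟨v₀, Finset.mem_univ v₀, ?_⟩
  have h1 : 0 < x v₀ ^ 2 :=
    lt_of_le_of_ne (sq_nonneg _) (Ne.symm (pow_ne_zero 2 hv₀))
  exact mul_pos h1 (div_pos (Mu_pos hd hL v₀) (uf_pos v₀))

lemma det_ne_zero (hd : 1 ≤ d) (hL : 1 ≤ L) : (dirichletLapMatrix d L).det ≠ 0 := by
  intro h
  obtain ⟨y, hy0, hy⟩ := Matrix.exists_mulVec_eq_zero_iff.mpr h
  have hpos := quad_pos hd hL y hy0
  rw [hy, dotProduct_zero] at hpos
  exact lt_irrefl 0 hpos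

lemma sum_range_cast (n : ℕ) : ∑ k ∈ Finset.range n, (k : ℝ) = ((n:ℝ) ^ 2 - n) / 2 := by
  induction n with
  | zero => simp
  | succ m ih => rw [Finset.sum_range_succ, ih]; push_cast; ring

lemma sum_range_sq (n : ℕ) :
    ∑ k ∈ Finset.range n, (k : ℝ) ^ 2 = (2 * (n:ℝ) ^ 3 - 3 * (n:ℝ) ^ 2 + n) / 6 := by
  induction n with
  | zero => simp
  | succ m ih => rw [Finset.sum_range_succ, ih]; push_cast; ring

lemma S1_ge (hL : 1 ≤ L) :
    ((L : ℝ) + 1) ^ 3 ≤ ∑ k : Fin (2 * L + 1), gr L ((k : ℕ) : ℝ) := by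
  rw [Fin.sum_univ_eq_sum_range (fun m => gr L (m : ℝ)) (2 * L + 1)]
  unfold gr
  have hexp : ∀ k : ℕ, ((L:ℝ) + 1) ^ 2 - ((k:ℝ) - L) ^ 2
      = ((((L:ℝ) + 1) ^ 2 - (L:ℝ) ^ 2) + (2 * (L:ℝ) * (k:ℝ) - (k:ℝ) ^ 2)) := by
    intro k; ring
  rw [Finset.sum_congr rfl fun k _ => hexp k, Finset.sum_add_distrib, Finset.sum_const,
    Finset.card_range, Finset.sum_sub_distrib, ← Finset.mul_sum, sum_range_cast, sum_range_sq,
    nsmul_eq_mul]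
  have hL1 : (1:ℝ) ≤ (L:ℝ) := by exact_mod_cast hL
  push_cast
  nlinarith [hL1, sq_nonneg ((L:ℝ)), mul_nonneg (mul_nonneg (by linarith : (0:ℝ) ≤ (L:ℝ))
    (by linarith : (0:ℝ) ≤ (L:ℝ))) (by linarith : (0:ℝ) ≤ (L:ℝ))]

lemma U_eq : ∑ v : LatticeBox d L, uf d L v
    = (∑ k : Fin (2 * L + 1), gr L ((k : ℕ) : ℝ)) ^ d := by
  have h := Finset.prod_univ_sum (κ := fun _ : Fin d => Fin (2 * L + 1))
    (t := fun _ => Finset.univ) (f := fun _ k => gr L ((k : ℕ) : ℝ))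
  rw [Fintype.piFinset_univ] at h
  unfold uf
  rw [← h, Finset.prod_const, Finset.card_univ, Fintype.card_fin]

end GreenAux

/-- The total mass of the Dirichlet Green's function on `Λ_L ⊂ ℤ^d`, `d ≥ 2`,
grows at least like `L^{d+2}`. -/
theorem green_total_mass_lower_bound (d : ℕ) (hd : 2 ≤ d) :
    ∃ c : ℝ, 0 < c ∧ ∀ L : ℕ, 1 ≤ L →
      c * (L : ℝ) ^ (d + 2) ≤ ∑ v : LatticeBox d L, ∑ w : LatticeBox d L,
        (dirichletLapMatrix d L)⁻¹ v w := by
  classical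
  refine ⟨1, one_pos, fun L hL => ?_⟩
  have hd1 : 1 ≤ d := le_trans one_le_two hd
  set M := dirichletLapMatrix d L with hM
  have hdet : M.det ≠ 0 := GreenAux.det_ne_zero hd1 hL
  have hMG : M * M⁻¹ = 1 := Matrix.mul_nonsing_inv _ (isUnit_iff_ne_zero.mpr hdet)
  set ones : LatticeBox d L → ℝ := fun _ => 1 with hones
  set b : LatticeBox d L → ℝ := M⁻¹ *ᵥ ones with hb
  have hMb : M *ᵥ b = ones := by
    have h1 : (M * M⁻¹) *ᵥ ones = (1 : Matrix (LatticeBox d L) (LatticeBox d L) ℝ) *ᵥ ones := by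
      rw [hMG]
    rw [← Matrix.mulVec_mulVec, Matrix.one_mulVec] at h1
    exact h1
  set u : LatticeBox d L → ℝ := GreenAux.uf d L with hu
  set U : ℝ := ∑ v : LatticeBox d L, u v with hU
  set S : ℝ := ∑ v : LatticeBox d L, ∑ w : LatticeBox d L, M⁻¹ v w with hS
  set Qu : ℝ := u ⬝ᵥ (M *ᵥ u) with hQu
  set B : ℝ := (((L : ℝ) + 1) ^ 2) ^ (d - 1) with hB
  have hSb : S = b ⬝ᵥ (M *ᵥ b) := by
    rw [hMb, hS, hb]
    simp [Matrix.mulVec, dotProduct, hones]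
  have hUb : u ⬝ᵥ (M *ᵥ b) = U := by
    rw [hMb, hU]
    simp [dotProduct, hones]
  have hbu : b ⬝ᵥ (M *ᵥ u) = U := by rw [GreenAux.dot_symm, hUb]
  have hU_pos : 0 < U := by
    rw [hU]
    exact Finset.sum_pos (fun v _ => GreenAux.uf_pos v) Finset.univ_nonempty
  have hB_pos : 0 < B := by rw [hB]; positivity
  have hQu_pos : 0 < Qu := by
    rw [hQu]
    refine GreenAux.quad_pos hd1 hL u ?_
    intro h0
    have := GreenAux.uf_pos (d := d) (L := L) (boxCenter d L)
    rw [show GreenAux.uf d L (boxCenter d L) = u (boxCenter d L) from rfl, h0] at this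
    simp at this
  have hQu_le : Qu ≤ B * U := by
    rw [hQu, hU, Finset.mul_sum]
    show ∑ v, u v * (M *ᵥ u) v ≤ _
    refine Finset.sum_le_sum fun v _ => ?_
    have h1 := GreenAux.Mu_le hd1 hL v
    have h2 := le_of_lt (GreenAux.uf_pos (d := d) (L := L) v)
    calc u v * (M *ᵥ u) v ≤ u v * B := mul_le_mul_of_nonneg_left (by rw [hB]; exact h1) h2
    _ = B * u v := mul_comm _ _
  have hS_nonneg : 0 ≤ S := by rw [hSb]; exact GreenAux.quad_nonneg hd1 hL b
  -- Cauchy–Schwarz via discriminant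
  have key : ∀ t : ℝ, 0 ≤ t ^ 2 * Qu + 2 * t * U + S := by
    intro t
    have h0 := GreenAux.quad_nonneg hd1 hL (t • u + b)
    have hexp : (t • u + b) ⬝ᵥ (dirichletLapMatrix d L *ᵥ (t • u + b))
        = t ^ 2 * Qu + 2 * t * U + S := by
      rw [Matrix.mulVec_add, Matrix.mulVec_smul, dotProduct_add, add_dotProduct,
        add_dotProduct, dotProduct_smul, dotProduct_smul, smul_dotProduct, smul_dotProduct]
      rw [show dirichletLapMatrix d L = M from rfl]
      rw [hSb, hQu]
      have e1 : u ⬝ᵥ (M *ᵥ b) = U := hUb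
      have e2 : b ⬝ᵥ (M *ᵥ u) = U := hbu
      rw [e1, e2]
      simp only [smul_eq_mul]
      ring
    rw [hexp] at h0
    exact h0
  have hCS : U ^ 2 ≤ Qu * S := by
    have h := key (-(U / Qu))
    have hQu0 : Qu ≠ 0 := ne_of_gt hQu_pos
    have h2 : (-(U / Qu)) ^ 2 * Qu + 2 * (-(U / Qu)) * U + S = S - U ^ 2 / Qu := by
      field_simp
      ring
    rw [h2] at h
    have h3 : U ^ 2 / Qu ≤ S := by linarith
    calc U ^ 2 = (U ^ 2 / Qu) * Qu := by field_simp
    _ ≤ S * Qu := mul_le_mul_of_nonneg_right h3 (le_of_lt hQu_pos)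
    _ = Qu * S := mul_comm _ _
  have hUBS : U ≤ B * S := by
    have h1 : Qu * S ≤ (B * U) * S := mul_le_mul_of_nonneg_right hQu_le hS_nonneg
    have h2 : U ^ 2 ≤ (B * U) * S := le_trans hCS h1
    nlinarith [hU_pos]
  -- lower bound on U
  have hU_ge : (((L : ℝ) + 1) ^ 3) ^ d ≤ U := by
    rw [hU, hu, GreenAux.U_eq]
    exact pow_le_pow_left₀ (by positivity) (GreenAux.S1_ge hL) d
  have hfact : B * ((L : ℝ) + 1) ^ (d + 2) = (((L : ℝ) + 1) ^ 3) ^ d := by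
    rw [hB, ← pow_mul, ← pow_mul, ← pow_add]
    congr 1
    omega
  have hLd : ((L : ℝ) + 1) ^ (d + 2) ≤ S := by
    have h1 : B * ((L : ℝ) + 1) ^ (d + 2) ≤ B * S := by
      rw [hfact]; exact le_trans hU_ge hUBS
    exact le_of_mul_le_mul_left h1 hB_pos
  have hLL : (L : ℝ) ^ (d + 2) ≤ ((L : ℝ) + 1) ^ (d + 2) :=
    pow_le_pow_left₀ (Nat.cast_nonneg _) (by linarith) _
  rw [one_mul]
  exact le_trans hLL (le_trans hLd (le_of_eq hS.symm))
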